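/- The penetration depth of two overlapping closed balls in ℝ^n with distinct centers equals r + s - ‖p - q‖: namely, inf{‖T‖ : the translate of B̄(p,r) by T is disjoint from B̄(q,s)} = r + s - ‖p - q‖ when ‖p - q‖ < r + s and p ≠ q. -/

import Mathlib

/-- Penetration depth of two overlapping closed balls with distinct centers:
the infimum of `‖T‖` over translations `T` moving `B̄(p,r)` out of contact
with `B̄(q,s)` equals `r + s - ‖p - q‖`. -/
theorem penetration_depth_overlapping_balls
    (n : ℕ) (p q : EuclideanSpace ℝ (Fin n)) (r s : ℝ)
    (hr : 0 ≤ r) (hs : 0 ≤ s)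
    (hne : 0 < ‖p - q‖) (hoverlap : ‖p - q‖ < r + s) :
    sInf {t : ℝ | ∃ T : EuclideanSpace ℝ (Fin n),
        (∀ a ∈ Metric.closedBall p r, a + T ∉ Metric.closedBall q s) ∧ t = ‖T‖} =
      r + s - ‖p - q‖ := by
  have hrs : 0 < r + s := hne.trans hoverlap
  have hd : (0:ℝ) < ‖p - q‖ := hne
  set d := ‖p - q‖ with hdef
  -- characterize the disjointness condition
  have key : ∀ T : EuclideanSpace ℝ (Fin n),
      (∀ a ∈ Metric.closedBall p r, a + T ∉ Metric.closedBall q s) ↔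
        r + s < ‖p - q + T‖ := by
    intro T
    constructor
    · intro h
      by_contra hle
      push_neg at hle
      set w : EuclideanSpace ℝ (Fin n) := q - (p + T) with hw
      have hwn : ‖w‖ ≤ r + s := by
        have : w = -(p - q + T) := by rw [hw]; module
        rw [this, norm_neg]; exact hle
      have hmem1 : p + (r / (r + s)) • w ∈ Metric.closedBall p r := by
        rw [Metric.mem_closedBall, dist_eq_norm]
        have : p + (r / (r + s)) • w - p = (r / (r + s)) • w := by module
        rw [this, norm_smul, Real.norm_eq_abs,
          abs_of_nonneg (div_nonneg hr hrs.le)]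
        calc r / (r + s) * ‖w‖ ≤ r / (r + s) * (r + s) := by
              exact mul_le_mul_of_nonneg_left hwn (div_nonneg hr hrs.le)
          _ = r := by field_simp
      have hmem2 : p + (r / (r + s)) • w + T ∈ Metric.closedBall q s := by
        rw [Metric.mem_closedBall, dist_eq_norm]
        have : p + (r / (r + s)) • w + T - q = (r / (r + s) - 1) • w := by
          rw [hw]; module
        rw [this, norm_smul, Real.norm_eq_abs]
        have h1 : r / (r + s) - 1 = -(s / (r + s)) := by field_simp; ring
        rw [h1, abs_neg, abs_of_nonneg (div_nonneg hs hrs.le)]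
        calc s / (r + s) * ‖w‖ ≤ s / (r + s) * (r + s) := by
              exact mul_le_mul_of_nonneg_left hwn (div_nonneg hs hrs.le)
          _ = s := by field_simp
      exact h _ hmem1 hmem2
    · intro h a ha hmem
      rw [Metric.mem_closedBall, dist_eq_norm] at ha hmem
      have : ‖p - q + T‖ ≤ ‖p - a‖ + ‖a + T - q‖ := by
        have : p - q + T = (p - a) + (a + T - q) := by module
        rw [this]; exact norm_add_le _ _
      have hpa : ‖p - a‖ ≤ r := by rw [← norm_neg]; simpa [neg_sub] using ha
      linarith
  -- lower and upper bounds
  have hSne : ∀ ε : ℝ, 0 < ε → (r + s - d + ε) ∈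
      {t : ℝ | ∃ T : EuclideanSpace ℝ (Fin n),
        (∀ a ∈ Metric.closedBall p r, a + T ∉ Metric.closedBall q s) ∧ t = ‖T‖} := by
    intro ε hε
    refine ⟨((r + s - d + ε) / d) • (p - q), ?_, ?_⟩
    · rw [key]
      have : p - q + ((r + s - d + ε) / d) • (p - q)
          = (1 + (r + s - d + ε) / d) • (p - q) := by module
      rw [this, norm_smul, Real.norm_eq_abs]
      have hc : 0 < (r + s - d + ε) / d := by
        apply div_pos _ hd; linarith
      rw [abs_of_pos (by linarith : (0:ℝ) < 1 + (r + s - d + ε) / d)]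
      have : (1 + (r + s - d + ε) / d) * d = d + (r + s - d + ε) := by
        field_simp
      rw [← hdef, this]; linarith
    · rw [norm_smul, Real.norm_eq_abs, ← hdef,
        abs_of_nonneg (div_nonneg (by linarith) hd.le)]
      field_simp
  apply le_antisymm
  · apply le_of_forall_pos_le_add
    intro ε hε
    calc sInf _ ≤ r + s - d + ε := csInf_le ⟨r + s - d, ?_⟩ (hSne ε hε)
      _ = r + s - d + ε := rfl
    rintro t ⟨T, hT, rfl⟩
    rw [key] at hT
    have : ‖p - q + T‖ ≤ d + ‖T‖ := by
      calc ‖p - q + T‖ ≤ ‖p - q‖ + ‖T‖ := norm_add_le _ _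
        _ = d + ‖T‖ := by rw [← hdef]
    linarith
  · apply le_csInf
    · exact ⟨_, hSne 1 one_pos⟩
    · rintro t ⟨T, hT, rfl⟩
      rw [key] at hT
      have : ‖p - q + T‖ ≤ d + ‖T‖ := by
        calc ‖p - q + T‖ ≤ ‖p - q‖ + ‖T‖ := norm_add_le _ _
          _ = d + ‖T‖ := by rw [← hdef]
      linarith
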